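/- arXiv:2302.06638 — 4 statements merged into one kernel-verified Lean document; each statement's English description precedes it below -/
import Mathlib

section
/- Let E be a nonzero finite-dimensional complex inner product space and T a self-adjoint linear operator on E. Let λk be an eigenvalue of T, let Δ > 0 be such that every eigenvalue μ of T with μ ≠ λk satisfies |μ − λk| ≥ Δ, let 0 < r < 1, and set σ = λk + rΔ. Then T − σ·id is invertible, and for every unit vector b in E one has Re⟨b, (T − σ·id)⁻¹ b⟩ ≥ −1/(rΔ); moreover equality holds if and only if b is an eigenvector of T with eigenvalue λk. In particular the minimum of the shift-inverted expectation value ⟨b, (T − σ·id)⁻¹ b⟩ over unit vectors equals −1/(rΔ) and is attained exactly on the λk-eigenspace. -/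
open scoped InnerProductSpace ComplexConjugate

lemma shiftInv_key_ineq {lamk Δ r t : ℝ} (hΔ : 0 < Δ) (hr0 : 0 < r) (hr1 : r < 1)
    (ht : t = lamk ∨ Δ ≤ |t - lamk|) :
    -(1 / (r * Δ)) ≤ (t - (lamk + r * Δ))⁻¹ ∧
    ((t - (lamk + r * Δ))⁻¹ = -(1 / (r * Δ)) ↔ t = lamk) := by
  have hrΔ : 0 < r * Δ := mul_pos hr0 hΔ
  rcases ht with h | h
  · subst h
    rw [show t - (t + r * Δ) = -(r * Δ) by ring, inv_neg, one_div]
    exact ⟨le_refl _, by simp⟩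
  · have hne : t ≠ lamk := by
      intro h'; rw [h'] at h; simp at h; linarith
    have hstrict : -(1 / (r * Δ)) < (t - (lamk + r * Δ))⁻¹ := by
      rcases le_abs.mp h with h2 | h2
      · have hx : 0 < t - (lamk + r * Δ) := by nlinarith
        have h3 : 0 < (t - (lamk + r * Δ))⁻¹ := inv_pos.mpr hx
        have h4 : 0 < 1 / (r * Δ) := one_div_pos.mpr hrΔ
        linarith
      · have hxneg : t - (lamk + r * Δ) < 0 := by nlinarith
        have h1 : (t - (lamk + r * Δ)) * (t - (lamk + r * Δ))⁻¹ = 1 :=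
          mul_inv_cancel₀ (ne_of_lt hxneg)
        have h5 : 1 / (r * Δ) * (r * Δ) = 1 := one_div_mul_cancel (ne_of_gt hrΔ)
        have hu : 0 < 1 / (r * Δ) := one_div_pos.mpr hrΔ
        by_contra hc
        push_neg at hc
        nlinarith [mul_nonneg (by linarith : (0:ℝ) ≤ -(1 / (r * Δ)) - (t - (lamk + r * Δ))⁻¹)
            (by linarith : (0:ℝ) ≤ -(t - (lamk + r * Δ))),
          mul_nonneg (by linarith : (0:ℝ) ≤ -(t - (lamk + r * Δ)) - (Δ + r * Δ)) hu.le,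
          mul_pos hΔ hu]
    exact ⟨hstrict.le, ⟨fun he => absurd he hstrict.ne', fun h' => absurd h' hne⟩⟩

/-- The shift-inverted operator `(T - σ·id)⁻¹` (via `Ring.inverse` in the
endomorphism ring; it equals the actual inverse whenever `T - σ·id` is a unit). -/
noncomputable def shiftInv {E : Type*} [NormedAddCommGroup E] [InnerProductSpace ℂ E]
    (T : E →ₗ[ℂ] E) (σ : ℝ) : E →ₗ[ℂ] E :=
  Ring.inverse (T - (σ : ℂ) • (1 : E →ₗ[ℂ] E))

theorem shift_inversion_minimization {E : Type*} [NormedAddCommGroup E]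
    [InnerProductSpace ℂ E] [FiniteDimensional ℂ E] [Nontrivial E]
    (T : E →ₗ[ℂ] E) (hT : T.IsSymmetric)
    (lamk Δ r : ℝ)
    (hlam : Module.End.HasEigenvalue T (lamk : ℂ))
    (hΔ : 0 < Δ)
    (hgap : ∀ μ : ℂ, Module.End.HasEigenvalue T μ → μ ≠ (lamk : ℂ) →
      Δ ≤ ‖μ - (lamk : ℂ)‖)
    (hr0 : 0 < r) (hr1 : r < 1)
    (σ : ℝ) (hσ : σ = lamk + r * Δ) :
    IsUnit (T - (σ : ℂ) • (1 : E →ₗ[ℂ] E)) ∧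
    ∀ b : E, ‖b‖ = 1 →
      -(1 / (r * Δ)) ≤ (inner ℂ b (shiftInv T σ b) : ℂ).re ∧
      ((inner ℂ b (shiftInv T σ b) : ℂ).re = -(1 / (r * Δ)) ↔ T b = (lamk : ℂ) • b) := by
  have hrΔ : 0 < r * Δ := mul_pos hr0 hΔ
  set A : E →ₗ[ℂ] E := T - (σ : ℂ) • (1 : E →ₗ[ℂ] E) with hAdef
  have hσnotev : ¬ Module.End.HasEigenvalue T (σ : ℂ) := by
    intro h
    have hne : (σ : ℂ) ≠ (lamk : ℂ) := by
      simp only [Ne, Complex.ofReal_inj]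
      intro h'; rw [hσ] at h'; nlinarith
    have hle := hgap _ h hne
    have habs : ‖(σ : ℂ) - (lamk : ℂ)‖ = r * Δ := by
      rw [show (σ : ℂ) - (lamk : ℂ) = ((r * Δ : ℝ) : ℂ) by rw [hσ]; push_cast; ring,
        Complex.norm_real, Real.norm_eq_abs, abs_of_pos hrΔ]
    rw [habs] at hle
    nlinarith
  have hker : LinearMap.ker A = ⊥ := by
    by_contra h
    exact hσnotev (Module.End.hasEigenvalue_iff.mpr
      (by rwa [Module.End.eigenspace_def]))
  have hunit : IsUnit A := (LinearMap.isUnit_iff_ker_eq_bot A).mpr hker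
  refine ⟨hunit, fun b hb => ?_⟩
  set S : E →ₗ[ℂ] E := shiftInv T σ with hSdef
  have hSR : S = Ring.inverse A := rfl
  have hSA : ∀ x, S (A x) = x := by
    intro x
    have h : (S * A) = 1 := by rw [hSR]; exact Ring.inverse_mul_cancel A hunit
    calc S (A x) = (S * A) x := rfl
      _ = x := by rw [h]; rfl
  have hAS : ∀ x, A (S x) = x := by
    intro x
    have h : (A * S) = 1 := by rw [hSR]; exact Ring.mul_inverse_cancel A hunit
    calc A (S x) = (A * S) x := rfl
      _ = x := by rw [h]; rfl
  have hAsym : A.IsSymmetric := by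
    intro x y
    simp only [hAdef, LinearMap.sub_apply, LinearMap.smul_apply, Module.End.one_apply,
      inner_sub_left, inner_sub_right, inner_smul_left, inner_smul_right, hT x y,
      Complex.conj_ofReal]
  have hSsym : S.IsSymmetric := by
    intro x y
    calc ⟪S x, y⟫_ℂ = ⟪S x, A (S y)⟫_ℂ := by rw [hAS]
      _ = ⟪A (S x), S y⟫_ℂ := (hAsym _ _).symm
      _ = ⟪x, S y⟫_ℂ := by rw [hAS]
  -- eigenbasis
  have hn : Module.finrank ℂ E = Module.finrank ℂ E := rfl
  set B := hT.eigenvectorBasis hn with hBdef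
  set μ : Fin (Module.finrank ℂ E) → ℝ := hT.eigenvalues hn with hμdef
  have happly : ∀ i, T (B i) = ((μ i : ℝ) : ℂ) • B i := fun i =>
    hT.apply_eigenvectorBasis hn i
  have hev : ∀ i, Module.End.HasEigenvalue T ((μ i : ℝ) : ℂ) := fun i =>
    hT.hasEigenvalue_eigenvalues hn i
  have hμσ : ∀ i, ((μ i : ℂ) - (σ : ℂ)) ≠ 0 := by
    intro i h
    have h' : ((μ i : ℝ) : ℂ) = (σ : ℂ) := by linear_combination h
    rw [← h'] at hσnotev
    exact hσnotev (hev i)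
  have hSB : ∀ i, S (B i) = (((μ i - σ : ℝ)) : ℂ)⁻¹ • B i := by
    intro i
    have h1 : A (B i) = (((μ i - σ : ℝ)) : ℂ) • B i := by
      simp only [hAdef, LinearMap.sub_apply, LinearMap.smul_apply, Module.End.one_apply,
        happly i]
      push_cast
      rw [sub_smul]
    have hc : (((μ i - σ : ℝ)) : ℂ) ≠ 0 := by
      intro h; apply hμσ i; push_cast at h; linear_combination h
    have h2 : (((μ i - σ : ℝ)) : ℂ) • S (B i) = B i := by
      rw [← map_smul, ← h1, hSA]
    calc S (B i) = (((μ i - σ : ℝ)) : ℂ)⁻¹ • ((((μ i - σ : ℝ)) : ℂ) • S (B i)) := by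
          rw [smul_smul, inv_mul_cancel₀ hc, one_smul]
      _ = (((μ i - σ : ℝ)) : ℂ)⁻¹ • B i := by rw [h2]
  set c : Fin (Module.finrank ℂ E) → ℂ := fun i => ⟪B i, b⟫_ℂ with hcdef
  set w : Fin (Module.finrank ℂ E) → ℝ := fun i => Complex.normSq (c i) with hwdef
  have hw0 : ∀ i, 0 ≤ w i := fun i => Complex.normSq_nonneg _
  have hwsum : ∑ i, w i = 1 := by
    have h1 : ∑ i, ⟪b, B i⟫_ℂ * ⟪B i, b⟫_ℂ = ⟪b, b⟫_ℂ := B.sum_inner_mul_inner b b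
    have h2 : ∀ i ∈ Finset.univ, ⟪b, B i⟫_ℂ * ⟪B i, b⟫_ℂ = ((w i : ℝ) : ℂ) := by
      intro i _
      rw [← inner_conj_symm b (B i)]
      exact (Complex.normSq_eq_conj_mul_self).symm
    rw [Finset.sum_congr rfl h2, ← Complex.ofReal_sum] at h1
    have h3 : ⟪b, b⟫_ℂ = ((1 : ℝ) : ℂ) := by
      rw [inner_self_eq_norm_sq_to_K, hb]; norm_num
    rw [h3] at h1
    exact_mod_cast h1
  have hre : (inner ℂ b (S b) : ℂ).re = ∑ i, (μ i - σ)⁻¹ * w i := by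
    have h1 : ∑ i, ⟪b, B i⟫_ℂ * ⟪B i, S b⟫_ℂ = ⟪b, S b⟫_ℂ := B.sum_inner_mul_inner b (S b)
    have h2 : ∀ i ∈ Finset.univ, ⟪b, B i⟫_ℂ * ⟪B i, S b⟫_ℂ
        = ((((μ i - σ)⁻¹ * w i : ℝ)) : ℂ) := by
      intro i _
      rw [← hSsym (B i) b, hSB i, inner_smul_left, map_inv₀, Complex.conj_ofReal,
        ← inner_conj_symm b (B i)]
      push_cast
      rw [show ((w i : ℝ) : ℂ) = conj ⟪B i, b⟫_ℂ * ⟪B i, b⟫_ℂ from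
        Complex.normSq_eq_conj_mul_self]
      ring
    rw [← h1, Finset.sum_congr rfl h2, ← Complex.ofReal_sum]
    exact Complex.ofReal_re _
  have hμgap : ∀ i, μ i = lamk ∨ Δ ≤ |μ i - lamk| := by
    intro i
    by_cases h : ((μ i : ℝ) : ℂ) = (lamk : ℂ)
    · left; exact_mod_cast h
    · right
      have h2 := hgap _ (hev i) h
      rwa [show ((μ i : ℝ) : ℂ) - (lamk : ℂ) = ((μ i - lamk : ℝ) : ℂ) by push_cast; ring,
        Complex.norm_real, Real.norm_eq_abs] at h2
  have hkey : ∀ i, -(1 / (r * Δ)) ≤ (μ i - σ)⁻¹ ∧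
      ((μ i - σ)⁻¹ = -(1 / (r * Δ)) ↔ μ i = lamk) := by
    intro i
    rw [hσ]
    exact shiftInv_key_ineq hΔ hr0 hr1 (hμgap i)
  have hterm : ∀ i, 0 ≤ ((μ i - σ)⁻¹ + 1 / (r * Δ)) * w i := fun i =>
    mul_nonneg (by linarith [(hkey i).1]) (hw0 i)
  have hsplit : (inner ℂ b (S b) : ℂ).re + 1 / (r * Δ) =
      ∑ i, ((μ i - σ)⁻¹ + 1 / (r * Δ)) * w i := by
    have h : ∀ i ∈ Finset.univ, ((μ i - σ)⁻¹ + 1 / (r * Δ)) * w i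
        = (μ i - σ)⁻¹ * w i + 1 / (r * Δ) * w i := fun i _ => by ring
    rw [hre, Finset.sum_congr rfl h, Finset.sum_add_distrib, ← Finset.mul_sum, hwsum, mul_one]
  have hsumnn : 0 ≤ ∑ i, ((μ i - σ)⁻¹ + 1 / (r * Δ)) * w i :=
    Finset.sum_nonneg (fun i _ => hterm i)
  constructor
  · linarith [hsplit, hsumnn]
  constructor
  · intro he
    have hzero : ∑ i, ((μ i - σ)⁻¹ + 1 / (r * Δ)) * w i = 0 := by
      rw [← hsplit, he]; ring
    have hall : ∀ i ∈ Finset.univ, ((μ i - σ)⁻¹ + 1 / (r * Δ)) * w i = 0 :=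
      (Finset.sum_eq_zero_iff_of_nonneg (fun i _ => hterm i)).mp hzero
    have hci : ∀ i, c i = 0 ∨ μ i = lamk := by
      intro i
      rcases mul_eq_zero.mp (hall i (Finset.mem_univ i)) with h | h
      · right
        have h' : (μ i - σ)⁻¹ = -(1 / (r * Δ)) := by linarith
        exact ((hkey i).2).mp h'
      · left
        exact Complex.normSq_eq_zero.mp h
    have hrepr : ∑ i, c i • B i = b := B.sum_repr' b
    calc T b = T (∑ i, c i • B i) := by rw [hrepr]
      _ = ∑ i, c i • (((μ i : ℝ) : ℂ) • B i) := by
          rw [map_sum]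
          exact Finset.sum_congr rfl (fun i _ => by rw [map_smul, happly i])
      _ = ∑ i, c i • ((lamk : ℂ) • B i) := by
          refine Finset.sum_congr rfl (fun i _ => ?_)
          rcases hci i with h | h
          · rw [h]; simp
          · rw [h]
      _ = (lamk : ℂ) • b := by
          rw [← hrepr, Finset.smul_sum]
          exact Finset.sum_congr rfl (fun i _ => smul_comm _ _ _)
  · intro he
    have hci : ∀ i, μ i ≠ lamk → c i = 0 := by
      intro i hne
      have h1 : ⟪B i, T b⟫_ℂ = ((μ i : ℝ) : ℂ) * c i := by
        rw [← hT (B i) b, happly i, inner_smul_left, Complex.conj_ofReal]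
      have h2 : ⟪B i, T b⟫_ℂ = (lamk : ℂ) * c i := by
        rw [he, inner_smul_right]
      have h3 : (((μ i : ℝ) : ℂ) - (lamk : ℂ)) * c i = 0 := by
        rw [sub_mul, ← h1, ← h2]; ring
      rcases mul_eq_zero.mp h3 with h | h
      · exfalso; apply hne
        have h' : ((μ i : ℝ) : ℂ) = (lamk : ℂ) := by linear_combination h
        exact_mod_cast h'
      · exact h
    rw [hre]
    have h : ∀ i ∈ Finset.univ, (μ i - σ)⁻¹ * w i = -(1 / (r * Δ)) * w i := by
      intro i _
      by_cases hc : μ i = lamk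
      · rw [((hkey i).2).mpr hc]
      · simp only [hwdef, hci i hc, Complex.normSq_zero, mul_zero]
    rw [Finset.sum_congr rfl h, ← Finset.mul_sum, hwsum, mul_one]
end

section
/- Let E be a nonzero finite-dimensional complex inner product space and T a self-adjoint linear operator on E. Let λk be an eigenvalue of T, let Δ > 0 be such that every eigenvalue μ of T with μ ≠ λk satisfies |μ − λk| ≥ Δ, let 0 < r < 1, and set σ = λk − rΔ. Then T − σ·id is invertible, and for every unit vector b in E one has Re⟨b, (T − σ·id)⁻¹ b⟩ ≤ 1/(rΔ); moreover equality holds if and only if b is an eigenvector of T with eigenvalue λk. In particular the maximum of the shift-inverted expectation value ⟨b, (T − σ·id)⁻¹ b⟩ over unit vectors equals 1/(rΔ) and is attained exactly on the λk-eigenspace. -/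
open Module LinearMap Finset

theorem shift_inversion_maximization {E : Type*} [NormedAddCommGroup E]
    [InnerProductSpace ℂ E] [FiniteDimensional ℂ E] [Nontrivial E]
    (T : E →ₗ[ℂ] E) (hT : T.IsSymmetric)
    (lamk Δ r : ℝ)
    (hlam : Module.End.HasEigenvalue T (lamk : ℂ))
    (hΔ : 0 < Δ)
    (hgap : ∀ μ : ℂ, Module.End.HasEigenvalue T μ → μ ≠ (lamk : ℂ) →
      Δ ≤ ‖μ - (lamk : ℂ)‖)
    (hr0 : 0 < r) (hr1 : r < 1)
    (σ : ℝ) (hσ : σ = lamk - r * Δ) :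
    IsUnit (T - (σ : ℂ) • (1 : E →ₗ[ℂ] E)) ∧
    ∀ b : E, ‖b‖ = 1 →
      (inner ℂ b (shiftInv T σ b) : ℂ).re ≤ 1 / (r * Δ) ∧
      ((inner ℂ b (shiftInv T σ b) : ℂ).re = 1 / (r * Δ) ↔ T b = (lamk : ℂ) • b) := by
  have hrΔ : 0 < r * Δ := mul_pos hr0 hΔ
  set S : E →ₗ[ℂ] E := T - (σ : ℂ) • (1 : E →ₗ[ℂ] E) with hSdef
  -- σ is distinct from every eigenvalue
  have hσne : ∀ μ : ℝ, Module.End.HasEigenvalue T (μ : ℂ) → μ ≠ σ := by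
    intro μ hμ hcon
    have hne : (μ : ℂ) ≠ (lamk : ℂ) := by
      intro h
      rw [Complex.ofReal_inj] at h
      rw [hcon, hσ] at h; nlinarith
    have h1 := hgap μ hμ hne
    rw [← Complex.ofReal_sub, Complex.norm_real, Real.norm_eq_abs, hcon, hσ] at h1
    have h2 : lamk - r * Δ - lamk = -(r * Δ) := by ring
    rw [h2, abs_neg, abs_of_pos hrΔ] at h1
    nlinarith
  -- invertibility
  have hker : LinearMap.ker S = ⊥ := by
    rw [LinearMap.ker_eq_bot']
    intro x hx
    by_contra hx0
    have hxe : T x = (σ : ℂ) • x := by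
      have h0 : T x - (σ : ℂ) • x = 0 := by
        simpa [hSdef, sub_smul, LinearMap.sub_apply] using hx
      rw [sub_eq_zero] at h0; exact h0
    have : Module.End.HasEigenvalue T ((σ : ℝ) : ℂ) :=
      Module.End.hasEigenvalue_of_hasEigenvector
        ⟨Module.End.mem_eigenspace_iff.2 hxe, hx0⟩
    exact hσne σ this rfl
  have hU : IsUnit S := (LinearMap.isUnit_iff_ker_eq_bot S).2 hker
  refine ⟨hU, ?_⟩
  -- the inverse
  set A : E →ₗ[ℂ] E := shiftInv T σ with hAdef
  have hAS : A * S = 1 := by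
    rw [hAdef, shiftInv, ← hSdef]; exact Ring.inverse_mul_cancel S hU
  have hSA : S * A = 1 := by
    rw [hAdef, shiftInv, ← hSdef]; exact Ring.mul_inverse_cancel S hU
  have hASx : ∀ x : E, A (S x) = x := fun x => by
    have := congrArg (fun f : E →ₗ[ℂ] E => f x) hAS; simpa using this
  have hSAx : ∀ x : E, S (A x) = x := fun x => by
    have := congrArg (fun f : E →ₗ[ℂ] E => f x) hSA; simpa using this
  -- spectral setup
  set n := Module.finrank ℂ E with hn
  have hn' : Module.finrank ℂ E = n := rfl
  set B := hT.eigenvectorBasis hn' with hB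
  set lam : Fin n → ℝ := hT.eigenvalues hn' with hlamdef
  have hTB : ∀ i, T (B i) = (lam i : ℂ) • B i := fun i =>
    hT.apply_eigenvectorBasis hn' i
  have hlamne : ∀ i, lam i ≠ σ := fun i =>
    hσne (lam i) (hT.hasEigenvalue_eigenvalues hn' i)
  -- weights
  set w : Fin n → ℝ := fun i => (lam i - σ)⁻¹ with hw
  have hAB : ∀ i, A (B i) = ((w i : ℝ) : ℂ) • B i := by
    intro i
    have hSB : S (B i) = ((lam i - σ : ℝ) : ℂ) • B i := by
      simp [hSdef, LinearMap.sub_apply, hTB i, sub_smul, Complex.ofReal_sub]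
    have hne : ((lam i - σ : ℝ) : ℂ) ≠ 0 := by
      simpa [sub_eq_zero] using fun h => hlamne i (Complex.ofReal_inj.1 h)
    have h1 : A (S (B i)) = B i := hASx _
    rw [hSB, map_smul] at h1
    calc A (B i) = ((((lam i - σ : ℝ) : ℂ))⁻¹ * ((lam i - σ : ℝ) : ℂ)) • A (B i) := by
          rw [inv_mul_cancel₀ hne, one_smul]
      _ = (((lam i - σ : ℝ) : ℂ))⁻¹ • (((lam i - σ : ℝ) : ℂ) • A (B i)) := by rw [mul_smul]
      _ = (((lam i - σ : ℝ) : ℂ))⁻¹ • B i := by rw [h1]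
      _ = ((w i : ℝ) : ℂ) • B i := by
          congr 1
          simp only [hw]
          push_cast
          ring
  -- A is symmetric
  have hSsym : S.IsSymmetric := by
    intro x y
    simp only [hSdef, LinearMap.sub_apply, LinearMap.smul_apply, Module.End.one_apply,
      inner_sub_left, inner_sub_right, inner_smul_left, inner_smul_right, hT x y]
    rw [Complex.conj_ofReal]
  have hAsym : A.IsSymmetric := by
    intro x y
    calc inner ℂ (A x) y = inner ℂ (A x) (S (A y)) := by rw [hSAx]
      _ = inner ℂ (S (A x)) (A y) := (hSsym (A x) (A y)).symm
      _ = inner ℂ x (A y) := by rw [hSAx]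
  intro b hb
  -- coefficients
  let c : Fin n → ℂ := fun i => (inner ℂ (B i) b : ℂ)
  have hc : ∀ i, c i = (inner ℂ (B i) b : ℂ) := fun _ => rfl
  have hconj : ∀ z : ℂ, starRingEnd ℂ z * z = ((‖z‖ ^ 2 : ℝ) : ℂ) := by
    intro z
    rw [mul_comm, Complex.mul_conj, Complex.normSq_eq_norm_sq]
  have hiBA : ∀ i, (inner ℂ (B i) (A b) : ℂ) = ((w i : ℝ) : ℂ) * c i := by
    intro i
    rw [← hAsym (B i) b, hAB i, inner_smul_left, Complex.conj_ofReal]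
  -- expectation value as a real sum
  have hkey : (inner ℂ b (A b) : ℂ) = ∑ i, ((w i * ‖c i‖ ^ 2 : ℝ) : ℂ) := by
    rw [← B.sum_inner_mul_inner b (A b)]
    refine Finset.sum_congr rfl fun i _ => ?_
    rw [hiBA i]
    have h1 : (inner ℂ b (B i) : ℂ) = starRingEnd ℂ (c i) := by
      rw [hc i]
      exact (inner_conj_symm _ _).symm
    rw [h1]
    calc starRingEnd ℂ (c i) * (((w i : ℝ) : ℂ) * c i)
        = ((w i : ℝ) : ℂ) * (starRingEnd ℂ (c i) * c i) := by ring
      _ = ((w i : ℝ) : ℂ) * ((‖c i‖ ^ 2 : ℝ) : ℂ) := by rw [hconj]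
      _ = ((w i * ‖c i‖ ^ 2 : ℝ) : ℂ) := by push_cast; ring
  have hre : (inner ℂ b (A b) : ℂ).re = ∑ i, w i * ‖c i‖ ^ 2 := by
    rw [hkey, Complex.re_sum]
    exact Finset.sum_congr rfl fun i _ => Complex.ofReal_re _
  -- sum of |c i|^2 = 1
  have hsum1 : ∑ i, ‖c i‖ ^ 2 = 1 := by
    have h0 : (inner ℂ b b : ℂ) = ∑ i, ((‖c i‖ ^ 2 : ℝ) : ℂ) := by
      rw [← B.sum_inner_mul_inner b b]
      refine Finset.sum_congr rfl fun i _ => ?_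
      have h1 : (inner ℂ b (B i) : ℂ) = starRingEnd ℂ (c i) := by
        rw [hc i]
        exact (inner_conj_symm _ _).symm
      rw [h1, ← hc i]
      exact hconj (c i)
    have h2 : (inner ℂ b b : ℂ) = 1 := by
      rw [inner_self_eq_norm_sq_to_K, hb]
      norm_num
    rw [h2] at h0
    have h3 := congrArg Complex.re h0.symm
    rw [Complex.re_sum] at h3
    simpa only [Complex.ofReal_re, Complex.one_re] using h3
  -- weights comparison
  have hwk : ∀ i, lam i = lamk → w i = 1 / (r * Δ) := by
    intro i h
    rw [hw]
    simp only [h, hσ]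
    rw [one_div]
    congr 1
    ring
  have hwlt : ∀ i, lam i ≠ lamk → w i < 1 / (r * Δ) := by
    intro i h
    have hμ : Module.End.HasEigenvalue T ((lam i : ℝ) : ℂ) :=
      hT.hasEigenvalue_eigenvalues hn' i
    have hgap' := hgap (lam i) hμ (by simpa [Complex.ofReal_inj] using h)
    rw [← Complex.ofReal_sub, Complex.norm_real, Real.norm_eq_abs] at hgap'
    rw [hw]
    rcases (le_abs'.mp hgap') with h1 | h1
    · -- lam i - lamk ≤ -Δ
      have hneg : lam i - σ < 0 := by rw [hσ]; nlinarith
      calc (lam i - σ)⁻¹ ≤ 0 := inv_nonpos.2 hneg.le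
        _ < 1 / (r * Δ) := div_pos one_pos hrΔ
    · -- Δ ≤ lam i - lamk
      have hpos : r * Δ < lam i - σ := by rw [hσ]; nlinarith
      rw [one_div]
      exact inv_strictAnti₀ hrΔ hpos
  have hwle : ∀ i, w i ≤ 1 / (r * Δ) := by
    intro i
    by_cases h : lam i = lamk
    · exact (hwk i h).le
    · exact (hwlt i h).le
  -- the inequality
  have hineq : (inner ℂ b (A b) : ℂ).re ≤ 1 / (r * Δ) := by
    rw [hre]
    calc ∑ i, w i * ‖c i‖ ^ 2 ≤ ∑ i, (1 / (r * Δ)) * ‖c i‖ ^ 2 := by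
          refine Finset.sum_le_sum fun i _ => ?_
          have : (0:ℝ) ≤ ‖c i‖ ^ 2 := by positivity
          nlinarith [hwle i]
      _ = 1 / (r * Δ) := by rw [← Finset.mul_sum, hsum1, mul_one]
  refine ⟨hineq, ?_⟩
  -- equality case
  have hrepr : ∀ x : E, B.repr x = fun i => (inner ℂ (B i) x : ℂ) := by
    intro x; funext i; exact B.repr_apply_apply x i
  have hTb_iff : T b = (lamk : ℂ) • b ↔ ∀ i, lam i ≠ lamk → c i = 0 := by
    constructor
    · intro h i hi
      have h1 := congrArg (fun v => ((hT.eigenvectorBasis hn').repr v) i) h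
      simp only at h1
      rw [hT.eigenvectorBasis_apply_self_apply hn' b i, map_smul] at h1
      have h2 : (lam i : ℂ) * B.repr b i = (lamk : ℂ) * B.repr b i := by
        simpa using h1
      have h3 : ((lam i : ℂ) - (lamk : ℂ)) * B.repr b i = 0 := by
        rw [sub_mul, h2, sub_self]
      rcases mul_eq_zero.1 h3 with h4 | h4
      · exact absurd (Complex.ofReal_inj.1 (sub_eq_zero.1 h4)) hi
      · rw [hc i, ← B.repr_apply_apply, hB]
        exact h4
    · intro h
      apply (hT.eigenvectorBasis hn').repr.injective
      ext i
      rw [hT.eigenvectorBasis_apply_self_apply hn' b i, map_smul]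
      by_cases hi : lam i = lamk
      · have h6 : (hT.eigenvalues hn' i : ℝ) = lamk := hi
        simp [h6]
      · have h5 : (hT.eigenvectorBasis hn').repr b i = 0 := by
          rw [(hT.eigenvectorBasis hn').repr_apply_apply, ← hB, ← hc i]
          exact h i hi
        simp [h5]
  rw [hre, hTb_iff]
  constructor
  · intro heq i hi
    by_contra hci
    have hlt : ∑ i, w i * ‖c i‖ ^ 2 < ∑ i, (1 / (r * Δ)) * ‖c i‖ ^ 2 := by
      refine Finset.sum_lt_sum (fun j _ => ?_) ⟨i, Finset.mem_univ i, ?_⟩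
      · have : (0:ℝ) ≤ ‖c j‖ ^ 2 := by positivity
        nlinarith [hwle j]
      · have hcpos : 0 < ‖c i‖ ^ 2 := pow_pos (norm_pos_iff.mpr hci) 2
        exact mul_lt_mul_of_pos_right (hwlt i hi) hcpos
    rw [← Finset.mul_sum, hsum1, mul_one] at hlt
    linarith
  · intro h
    have : ∀ i, w i * ‖c i‖ ^ 2 = (1 / (r * Δ)) * ‖c i‖ ^ 2 := by
      intro i
      by_cases hi : lam i = lamk
      · rw [hwk i hi]
      · rw [h i hi]; simp
    calc ∑ i, w i * ‖c i‖ ^ 2 = ∑ i, (1 / (r * Δ)) * ‖c i‖ ^ 2 :=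
          Finset.sum_congr rfl fun i _ => this i
      _ = 1 / (r * Δ) := by rw [← Finset.mul_sum, hsum1, mul_one]
end

section
/- Let E be a finite-dimensional complex inner product space, T a self-adjoint linear operator on E, and σ a real number. Let Δ > 0 and 0 < r < 1, and suppose every eigenvalue μ of T satisfies |μ − σ| ≥ rΔ. Let b be a unit vector, set S = (T − σ·id)⁻¹, x = Sb/‖Sb‖, let x̃ be any unit vector and e any real number. If |e − Re⟨x̃, (T − σ·id) x̃⟩| + |Re⟨x̃, (T − σ·id) x̃⟩ − Re⟨x, (T − σ·id) x⟩| ≤ rΔ/(1 − r), then |⟨b, S b⟩ − ‖Sb‖² · e| ≤ 1/(Δ · r · (1 − r)). -/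
lemma symm_norm_lower_bound {E : Type*} [NormedAddCommGroup E]
    [InnerProductSpace ℂ E] [FiniteDimensional ℂ E]
    (A : E →ₗ[ℂ] E) (hA : A.IsSymmetric) (c : ℝ) (hc : 0 ≤ c)
    (hgap : ∀ μ : ℂ, Module.End.HasEigenvalue A μ → c ≤ ‖μ‖)
    (v : E) : c * ‖v‖ ≤ ‖A v‖ := by
  have hn : Module.finrank ℂ E = Module.finrank ℂ E := rfl
  set B := hA.eigenvectorBasis hn with hB
  have key : ∀ i, c ≤ |hA.eigenvalues hn i| := by
    intro i
    have := hgap (hA.eigenvalues hn i : ℂ) (by exact_mod_cast hA.hasEigenvalue_eigenvalues hn i)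
    simpa using this
  have hsq : (c * ‖v‖) ^ 2 ≤ ‖A v‖ ^ 2 := by
    have h1 : ‖A v‖ ^ 2 = ∑ i, ‖B.repr (A v) i‖ ^ 2 := by
      rw [← B.repr.norm_map (A v), EuclideanSpace.norm_eq, Real.sq_sqrt]
      positivity
    have h2 : ‖v‖ ^ 2 = ∑ i, ‖B.repr v i‖ ^ 2 := by
      rw [← B.repr.norm_map v, EuclideanSpace.norm_eq, Real.sq_sqrt]
      positivity
    rw [h1, mul_pow, h2, Finset.mul_sum]
    apply Finset.sum_le_sum
    intro i _
    have h3 : B.repr (A v) i = (hA.eigenvalues hn i : ℂ) * B.repr v i := by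
      exact_mod_cast hA.eigenvectorBasis_apply_self_apply hn v i
    rw [h3, norm_mul, mul_pow]
    have h4 : c ^ 2 ≤ ‖(hA.eigenvalues hn i : ℂ)‖ ^ 2 := by
      rw [Complex.norm_real, Real.norm_eq_abs]
      exact pow_le_pow_left₀ hc (key i) 2
    nlinarith [norm_nonneg (B.repr v i), sq_nonneg (B.repr v i : ℂ).re]
  have := Real.sqrt_le_sqrt hsq
  rwa [Real.sqrt_sq (by positivity), Real.sqrt_sq (norm_nonneg _)] at this

theorem cost_error_within_distinguishability {E : Type*} [NormedAddCommGroup E]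
    [InnerProductSpace ℂ E] [FiniteDimensional ℂ E]
    (T : E →ₗ[ℂ] E) (hT : T.IsSymmetric)
    (σ Δ r : ℝ) (hΔ : 0 < Δ) (hr0 : 0 < r) (hr1 : r < 1)
    (hgap : ∀ μ : ℂ, Module.End.HasEigenvalue T μ → r * Δ ≤ ‖μ - (σ : ℂ)‖)
    (b : E) (hb : ‖b‖ = 1)
    (S : E →ₗ[ℂ] E) (hS : S = Ring.inverse (T - (σ : ℂ) • (1 : E →ₗ[ℂ] E)))
    (x : E) (hx : x = (‖S b‖ : ℂ)⁻¹ • S b)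
    (xt : E) (hxt : ‖xt‖ = 1) (e : ℝ)
    (herr : |e - (inner ℂ xt ((T - (σ : ℂ) • (1 : E →ₗ[ℂ] E)) xt) : ℂ).re| +
        |(inner ℂ xt ((T - (σ : ℂ) • (1 : E →ₗ[ℂ] E)) xt) : ℂ).re -
          (inner ℂ x ((T - (σ : ℂ) • (1 : E →ₗ[ℂ] E)) x) : ℂ).re| ≤
        r * Δ / (1 - r)) :
    |(inner ℂ b (S b) : ℂ).re - ‖S b‖ ^ 2 * e| ≤ 1 / (Δ * r * (1 - r)) := by
  set A : E →ₗ[ℂ] E := T - (σ : ℂ) • (1 : E →ₗ[ℂ] E) with hAdef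
  have hA : A.IsSymmetric := by
    intro u w
    simp only [hAdef, LinearMap.sub_apply, LinearMap.smul_apply, Module.End.one_apply,
      inner_sub_left, inner_sub_right, inner_smul_left, inner_smul_right, hT u w,
      Complex.conj_ofReal]
  have hgapA : ∀ μ : ℂ, Module.End.HasEigenvalue A μ → r * Δ ≤ ‖μ‖ := by
    intro μ hμ
    obtain ⟨v, hv⟩ := hμ.exists_hasEigenvector
    have hAv : A v = μ • v := Module.End.mem_eigenspace_iff.mp hv.1
    have hTv : T v = (μ + σ) • v := by
      have : T v - (σ : ℂ) • v = μ • v := by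
        simpa [hAdef, LinearMap.sub_apply] using hAv
      rw [add_smul]
      linear_combination (norm := module) this
    have hT' : Module.End.HasEigenvalue T (μ + σ) :=
      Module.End.hasEigenvalue_of_hasEigenvector
        ⟨Module.End.mem_eigenspace_iff.mpr hTv, hv.2⟩
    simpa using hgap (μ + σ) hT'
  have hlow : ∀ v : E, (r * Δ) * ‖v‖ ≤ ‖A v‖ :=
    symm_norm_lower_bound A hA (r * Δ) (by positivity) hgapA
  have hinj : Function.Injective A := by
    rw [← LinearMap.ker_eq_bot, LinearMap.ker_eq_bot']
    intro v hv
    have := hlow v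
    rw [hv, norm_zero] at this
    have : ‖v‖ ≤ 0 := by nlinarith [mul_pos hr0 hΔ]
    simpa [norm_le_zero_iff] using this
  have hUnit : IsUnit A := (Module.End.isUnit_iff A).mpr
    ⟨hinj, (LinearMap.injective_iff_surjective).mp hinj⟩
  have hAS : A (S b) = b := by
    rw [hS]
    have h := Ring.mul_inverse_cancel A hUnit
    calc A (Ring.inverse A b) = (A * Ring.inverse A) b := rfl
      _ = b := by rw [h]; rfl
  have hNle : ‖S b‖ ≤ 1 / (r * Δ) := by
    have := hlow (S b)
    rw [hAS, hb] at this
    rw [le_div_iff₀ (by positivity)]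
    linarith
  have hSb_ne : S b ≠ 0 := by
    intro h
    rw [h, map_zero] at hAS
    rw [← hAS, norm_zero] at hb
    norm_num at hb
  have hN : 0 < ‖S b‖ := norm_pos_iff.mpr hSb_ne
  -- inner identity
  have hx_inner : (inner ℂ x (A x) : ℂ) = ((‖S b‖ : ℂ) ^ 2)⁻¹ * inner ℂ (S b) b := by
    rw [hx, map_smul, inner_smul_left, inner_smul_right, hAS, Complex.conj_inv,
      Complex.conj_ofReal]
    ring
  have hre : (inner ℂ x (A x) : ℂ).re = (‖S b‖ ^ 2)⁻¹ * (inner ℂ b (S b) : ℂ).re := by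
    rw [hx_inner]
    have h1 : (inner ℂ (S b) b : ℂ).re = (inner ℂ b (S b) : ℂ).re := by
      rw [← inner_conj_symm b (S b), Complex.conj_re]
    have h2 : ((‖S b‖ : ℂ) ^ 2)⁻¹ = (((‖S b‖ ^ 2)⁻¹ : ℝ) : ℂ) := by push_cast; ring
    rw [h2, Complex.re_ofReal_mul, h1]
  have hkey : (inner ℂ b (S b) : ℂ).re = ‖S b‖ ^ 2 * (inner ℂ x (A x) : ℂ).re := by
    rw [hre]
    field_simp
  have h1r : (0:ℝ) < 1 - r := by linarith
  have habs : |(inner ℂ x (A x) : ℂ).re - e| ≤ r * Δ / (1 - r) := by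
    rw [abs_sub_comm]
    exact le_trans (abs_sub_le e ((inner ℂ xt (A xt) : ℂ).re) _) herr
  rw [hkey, ← mul_sub, abs_mul, abs_of_nonneg (by positivity : (0:ℝ) ≤ ‖S b‖ ^ 2)]
  have hN2 : ‖S b‖ ^ 2 ≤ (1 / (r * Δ)) ^ 2 :=
    pow_le_pow_left₀ (norm_nonneg _) hNle 2
  calc ‖S b‖ ^ 2 * |(inner ℂ x (A x) : ℂ).re - e|
      ≤ (1 / (r * Δ)) ^ 2 * (r * Δ / (1 - r)) := by
        apply mul_le_mul hN2 habs (abs_nonneg _) (by positivity)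
    _ = 1 / (Δ * r * (1 - r)) := by
        rw [div_pow, one_pow, div_mul_div_comm, one_mul,
          div_eq_div_iff (by positivity) (by positivity)]
        ring
end

section
/- Let E be a finite-dimensional complex inner product space, M a self-adjoint linear operator on E with operator norm ‖M‖, and ψ, φ unit vectors in E. Then |Re⟨ψ, M ψ⟩ − Re⟨φ, M φ⟩| ≤ 2 · ‖M‖ · √(1 − |⟨ψ, φ⟩|²). -/
theorem expectation_difference_fidelity_bound {E : Type*} [NormedAddCommGroup E]
    [InnerProductSpace ℂ E] [FiniteDimensional ℂ E]
    (M : E →ₗ[ℂ] E) (hM : M.IsSymmetric)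
    (ψ φ : E) (hψ : ‖ψ‖ = 1) (hφ : ‖φ‖ = 1) :
    |(inner ℂ ψ (M ψ) : ℂ).re - (inner ℂ φ (M φ) : ℂ).re| ≤
      2 * ‖LinearMap.toContinuousLinearMap M‖ *
        Real.sqrt (1 - ‖(inner ℂ ψ φ : ℂ)‖ ^ 2) := by
  set a : ℂ := inner ℂ ψ φ with ha
  set t : ℝ := ‖a‖ with ht
  have ht0 : 0 ≤ t := norm_nonneg a
  have ht1 : t ≤ 1 := by
    calc t = ‖a‖ := rfl
    _ ≤ ‖ψ‖ * ‖φ‖ := norm_inner_le_norm ψ φ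
    _ = 1 := by rw [hψ, hφ]; ring
  obtain ⟨c, hc1, hc2⟩ : ∃ c : ℂ, ‖c‖ = 1 ∧ c * a = (t : ℂ) := by
    by_cases h : a = 0
    · exact ⟨1, by simp, by simp [h, ht, ha, h]⟩
    · refine ⟨(starRingEnd ℂ) a / (t : ℂ), ?_, ?_⟩
      · simp [map_div₀, ht, Complex.norm_real, abs_of_nonneg ht0,
          div_self (show ‖a‖ ≠ 0 by simpa using h)]
      · have htne : (t : ℂ) ≠ 0 := by
          simpa [ht] using (norm_ne_zero_iff.mpr h)
        field_simp
        rw [mul_comm]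
        rw [Complex.mul_conj]
        rw [Complex.normSq_eq_norm_sq]
        push_cast [ht]
        ring
  set φ' : E := c • φ with hφ'
  have hip : (inner ℂ ψ φ' : ℂ) = (t : ℂ) := by
    rw [hφ', inner_smul_right, ← ha, hc2]
  have hip' : (inner ℂ φ' ψ : ℂ) = (t : ℂ) := by
    rw [← inner_conj_symm, hip]
    simp
  have hnφ' : ‖φ'‖ = 1 := by
    rw [hφ', norm_smul, hφ, mul_one]
    simpa using hc1
  have hexp : (inner ℂ φ' (M φ') : ℂ) = inner ℂ φ (M φ) := by
    rw [hφ', map_smul, inner_smul_left, inner_smul_right, ← mul_assoc,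
      Complex.conj_mul']
    simp [hc1]
  -- key identity
  set z : ℂ := inner ℂ (ψ + φ') (M ψ - M φ') with hz
  have hzre : z.re = (inner ℂ ψ (M ψ) : ℂ).re - (inner ℂ φ (M φ) : ℂ).re := by
    have hsym : (inner ℂ φ' (M ψ) : ℂ).re = (inner ℂ ψ (M φ') : ℂ).re := by
      rw [← inner_conj_symm φ' (M ψ), hM ψ φ', Complex.conj_re]
    rw [hz, inner_add_left, inner_sub_right, inner_sub_right, hexp]
    simp only [Complex.add_re, Complex.sub_re]
    rw [hsym]
    ring
  -- norms
  have hplus : ‖ψ + φ'‖ ^ 2 = 2 + 2 * t := by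
    rw [@norm_add_sq ℂ]
    rw [hψ, hnφ', hip]
    simp
    ring
  have hminus : ‖ψ - φ'‖ ^ 2 = 2 - 2 * t := by
    rw [@norm_sub_sq ℂ]
    rw [hψ, hnφ', hip]
    simp
    ring
  set N := ‖LinearMap.toContinuousLinearMap M‖ with hN
  have hN0 : 0 ≤ N := norm_nonneg _
  have hzb : ‖z‖ ≤ ‖ψ + φ'‖ * (N * ‖ψ - φ'‖) := by
    calc ‖z‖ = ‖z‖ := rfl
    _ ≤ ‖ψ + φ'‖ * ‖M ψ - M φ'‖ := norm_inner_le_norm _ _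
    _ ≤ ‖ψ + φ'‖ * (N * ‖ψ - φ'‖) := by
        apply mul_le_mul_of_nonneg_left _ (norm_nonneg _)
        have : M ψ - M φ' = LinearMap.toContinuousLinearMap M (ψ - φ') := by
          simp [map_sub]
        rw [this]
        exact (LinearMap.toContinuousLinearMap M).le_opNorm _
  have hprod : ‖ψ + φ'‖ * ‖ψ - φ'‖ ≤ 2 * Real.sqrt (1 - t ^ 2) := by
    have h4 : (2 : ℝ) * Real.sqrt (1 - t ^ 2) = Real.sqrt (4 * (1 - t ^ 2)) := by
      rw [show (4 : ℝ) = 2 ^ 2 by norm_num, Real.sqrt_mul (by positivity),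
        Real.sqrt_sq (by norm_num)]
    rw [h4]
    rw [show (4 : ℝ) * (1 - t ^ 2) = (2 + 2 * t) * (2 - 2 * t) by ring]
    rw [← hplus, ← hminus]
    rw [show ‖ψ + φ'‖ ^ 2 * ‖ψ - φ'‖ ^ 2 = (‖ψ + φ'‖ * ‖ψ - φ'‖) ^ 2 by ring]
    rw [Real.sqrt_sq (by positivity)]
  calc |(inner ℂ ψ (M ψ) : ℂ).re - (inner ℂ φ (M φ) : ℂ).re| = |z.re| := by rw [hzre]
  _ ≤ ‖z‖ := Complex.abs_re_le_norm z
  _ ≤ ‖ψ + φ'‖ * (N * ‖ψ - φ'‖) := hzb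
  _ = N * (‖ψ + φ'‖ * ‖ψ - φ'‖) := by ring
  _ ≤ N * (2 * Real.sqrt (1 - t ^ 2)) := by
      exact mul_le_mul_of_nonneg_left hprod hN0
  _ = 2 * N * Real.sqrt (1 - ‖(inner ℂ ψ φ : ℂ)‖ ^ 2) := by
      rw [← ha, ← ht]; ring
end
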